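/- Let α ≥ 0, x ∈ ℝ^n with E_1(x) ≥ 0, ..., E_s(x) ≥ 0, and 1 ≤ k ≤ s. Then S_{k;s}(x)² − S_{k-1;s}(x)S_{k+1;s}(x) ≥ 0, where S_{m;s}(x) = ∑_{i=0}^s C(s,i)α^i E_{m-i}(x). (In particular each coefficient L_b of α^b, 0 ≤ b ≤ 2k, in the expansion of S_{k;s}² − S_{k-1;s}S_{k+1;s} is nonnegative.) -/

import Mathlib

/-- The k-th elementary symmetric polynomial of `x : Fin n → ℝ`, with the
conventions `σ_0 = 1` and `σ_k = 0` for `k < 0` or `k > n`. -/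
noncomputable def esymm (n : ℕ) (x : Fin n → ℝ) (k : ℤ) : ℝ :=
  if 0 ≤ k then ∑ s ∈ (Finset.univ : Finset (Fin n)).powersetCard k.toNat, ∏ i ∈ s, x i else 0

/-- The normalized elementary symmetric mean `E_k(x) = σ_k(x) / C(n,k)`. -/
noncomputable def Esymm (n : ℕ) (x : Fin n → ℝ) (k : ℤ) : ℝ :=
  esymm n x k / (n.choose k.toNat)


/-- `S_{m;s}(x) = ∑_{i=0}^{s} C(s,i) α^i E_{m-i}(x)`. -/
noncomputable def Ss (n : ℕ) (α : ℝ) (x : Fin n → ℝ) (s : ℕ) (m : ℤ) : ℝ :=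
  ∑ i ∈ Finset.range (s + 1), (s.choose i : ℝ) * α ^ i * Esymm n x (m - i)

open Finset Polynomial

section Aux


lemma esymm_neg (n : ℕ) (x : Fin n → ℝ) (k : ℤ) (hk : k < 0) : esymm n x k = 0 := by
  simp [esymm, not_le.mpr hk]

lemma esymm_natCast (n : ℕ) (x : Fin n → ℝ) (k : ℕ) :
    esymm n x k = ∑ s ∈ (Finset.univ : Finset (Fin n)).powersetCard k, ∏ i ∈ s, x i := by
  simp [esymm]

lemma esymm_zero (n : ℕ) (x : Fin n → ℝ) : esymm n x 0 = 1 := by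
  rw [show (0:ℤ) = ((0:ℕ):ℤ) by norm_num, esymm_natCast]
  simp

lemma esymm_gt (n : ℕ) (x : Fin n → ℝ) (k : ℕ) (hk : n < k) : esymm n x k = 0 := by
  rw [esymm_natCast, Finset.powersetCard_eq_empty.mpr (by simpa using hk)]
  simp

lemma Esymm_neg (n : ℕ) (x : Fin n → ℝ) (k : ℤ) (hk : k < 0) : Esymm n x k = 0 := by
  simp [Esymm, esymm_neg n x k hk]

lemma Esymm_zero (n : ℕ) (x : Fin n → ℝ) : Esymm n x 0 = 1 := by
  simp [Esymm, esymm_zero]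

lemma Esymm_gt (n : ℕ) (x : Fin n → ℝ) (k : ℕ) (hk : n < k) : Esymm n x k = 0 := by
  simp [Esymm, esymm_gt n x k hk]

lemma esymm_eq_multiset_esymm (n : ℕ) (x : Fin n → ℝ) (k : ℕ) :
    esymm n x k = (Finset.univ.val.map x).esymm k := by
  rw [esymm_natCast, Finset.esymm_map_val]

lemma Esymm_eq (n : ℕ) (x : Fin n → ℝ) (k : ℕ) :
    Esymm n x k = esymm n x k / (n.choose k) := by
  simp [Esymm]


lemma choose_id (n j : ℕ) : (n + 1 - j) * (n+1).choose j = (n+1) * n.choose j := by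
  have h1 := Nat.add_one_mul_choose_eq n j
  have h2 := Nat.choose_succ_right_eq (n+1) j
  rw [h2] at h1
  rw [mul_comm]
  exact h1.symm

/-- key derivative reduction -/
lemma exists_derived (n : ℕ) (x : Fin (n+1) → ℝ) :
    ∃ y : Fin n → ℝ, ∀ j : ℕ, j ≤ n → Esymm n y j = Esymm (n+1) x j := by
  classical
  have hcardM : Multiset.card (Finset.univ.val.map x) = n + 1 := by simp
  set P : ℝ[X] := (((Finset.univ.val.map x) : Multiset ℝ).map (fun r => X + C r)).prod with hP
  have hPcoeff : ∀ c : ℕ, c ≤ n + 1 → P.coeff c = esymm (n+1) x ((n + 1 - c : ℕ) : ℤ) := by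
    intro c hc
    rw [hP, Multiset.prod_X_add_C_coeff _ (by rw [hcardM]; exact hc), hcardM,
      esymm_eq_multiset_esymm]
  have hPeq : P = (((Finset.univ.val.map x).map (fun a => -a)).map (fun a => X - C a)).prod := by
    rw [hP]
    simp only [Multiset.map_map]
    congr 1
    apply Multiset.map_congr rfl
    intro a _
    simp [Function.comp, sub_neg_eq_add]
  have hProots : P.roots = (Finset.univ.val.map x).map (fun a => -a) := by
    rw [hPeq, roots_multiset_prod_X_sub_C]
  have hPmonic : P.Monic := by
    rw [hP]
    apply monic_multiset_prod_of_monic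
    intro a _
    exact monic_X_add_C a
  have hPdeg : P.natDegree = n + 1 := by
    rw [hPeq, natDegree_multiset_prod_X_sub_C_eq_card]
    simp
  have hQcoeffn : (derivative P).coeff n = ((n:ℝ) + 1) := by
    rw [coeff_derivative]
    have h1 : P.coeff (n + 1) = 1 := by
      have := hPmonic.coeff_natDegree
      rwa [hPdeg] at this
    rw [h1]; ring
  have hQne : derivative P ≠ 0 := by
    intro h
    rw [h, coeff_zero] at hQcoeffn
    have : (0:ℝ) < (n:ℝ) + 1 := by positivity
    exact this.ne hQcoeffn
  have hQdeg : (derivative P).natDegree = n := by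
    refine le_antisymm ?_ (le_natDegree_of_ne_zero (by rw [hQcoeffn]; positivity))
    have := natDegree_derivative_le P
    rw [hPdeg] at this
    omega
  have hQroots : Multiset.card (derivative P).roots = n := by
    refine le_antisymm (by rw [← hQdeg]; exact card_roots' _) ?_
    have h1 := card_roots_le_derivative P
    rw [hProots] at h1
    simp only [Multiset.card_map, Finset.card_val, Finset.card_univ, Fintype.card_fin] at h1
    omega
  have hQsplits : Splits (derivative P) :=
    splits_iff_card_roots.mpr (by rw [hQroots, hQdeg])
  have hQlead : (derivative P).leadingCoeff = ((n:ℝ)+1) := by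
    rw [leadingCoeff, hQdeg, hQcoeffn]
  have hQfact := hQsplits.eq_prod_roots
  set M' : Multiset ℝ := (derivative P).roots.map (fun a => -a) with hM'
  have hM'card : Multiset.card M' = n := by rw [hM', Multiset.card_map, hQroots]
  have hfact2 : derivative P = C ((n:ℝ)+1) * (M'.map (fun r => X + C r)).prod := by
    rw [hQfact, hQlead, hM', Multiset.map_map]
    congr 2
    apply Multiset.map_congr rfl
    intro a _
    simp [Function.comp, sub_eq_add_neg]
  have hQcoeff : ∀ c : ℕ, c ≤ n → (derivative P).coeff c = ((n:ℝ)+1) * M'.esymm (n - c) := by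
    intro c hc
    rw [hfact2, coeff_C_mul, Multiset.prod_X_add_C_coeff _ (by rw [hM'card]; exact hc), hM'card]
  have hkey : ∀ j : ℕ, j ≤ n →
      ((n + 1 - j : ℕ) : ℝ) * esymm (n+1) x j = ((n:ℝ)+1) * M'.esymm j := by
    intro j hj
    have h1 := hQcoeff (n - j) (Nat.sub_le n j)
    rw [coeff_derivative, hPcoeff (n - j + 1) (by omega)] at h1
    have e1 : n + 1 - (n - j + 1) = j := by omega
    have e2 : n - (n - j) = j := by omega
    rw [e1, e2] at h1
    have e3 : ((n - j : ℕ) : ℝ) + 1 = ((n + 1 - j : ℕ) : ℝ) := by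
      rw [Nat.cast_sub hj, Nat.cast_sub (by omega : j ≤ n + 1)]
      push_cast; ring
    rw [e3] at h1
    rw [mul_comm]
    exact h1
  obtain ⟨l, hl⟩ : ∃ l : List ℝ, (l : Multiset ℝ) = M' := ⟨M'.toList, M'.coe_toList⟩
  have hlen : l.length = n := by
    have := congrArg Multiset.card hl
    simpa [hM'card] using this
  subst hlen
  refine ⟨l.get, ?_⟩
  intro j hj
  have h2 : esymm l.length l.get j = M'.esymm j := by
    rw [esymm_eq_multiset_esymm, Fin.univ_val_map, List.ofFn_get, hl]
  rw [Esymm_eq, Esymm_eq, h2]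
  have hc1 : (0:ℝ) < (l.length.choose j : ℝ) := by
    exact_mod_cast Nat.cast_pos.mpr (Nat.choose_pos hj)
  have hc2 : (0:ℝ) < ((l.length+1).choose j : ℝ) := by
    exact_mod_cast Nat.cast_pos.mpr (Nat.choose_pos (by omega))
  rw [div_eq_div_iff hc1.ne' hc2.ne']
  have hNpos : (0:ℝ) < (l.length : ℝ) + 1 := by positivity
  apply mul_left_cancel₀ hNpos.ne'
  have hch : ((l.length + 1 - j : ℕ) : ℝ) * ((l.length+1).choose j : ℝ)
      = ((l.length : ℝ) + 1) * (l.length.choose j : ℝ) := by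
    have := choose_id l.length j
    exact_mod_cast congrArg (fun t : ℕ => (t : ℝ)) this
  calc ((l.length:ℝ)+1) * (M'.esymm j * ((l.length+1).choose j : ℝ))
      = (((l.length:ℝ)+1) * M'.esymm j) * ((l.length+1).choose j : ℝ) := by ring
    _ = (((l.length + 1 - j : ℕ) : ℝ) * esymm (l.length+1) x j) * ((l.length+1).choose j : ℝ) := by
        rw [hkey j hj]
    _ = esymm (l.length+1) x j * (((l.length + 1 - j : ℕ) : ℝ) * ((l.length+1).choose j : ℝ)) := by
        ring
    _ = esymm (l.length+1) x j * (((l.length : ℝ) + 1) * (l.length.choose j : ℝ)) := by rw [hch]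
    _ = ((l.length:ℝ)+1) * (esymm (l.length+1) x j * (l.length.choose j : ℝ)) := by ring


lemma sum_powersetCard_compl {n k : ℕ} (f : Finset (Fin n) → ℝ) (hk : k ≤ n) :
    ∑ A ∈ Finset.powersetCard k (Finset.univ : Finset (Fin n)), f A
      = ∑ B ∈ Finset.powersetCard (n - k) (Finset.univ : Finset (Fin n)), f (Finset.univ \ B) := by
  classical
  refine Finset.sum_nbij' (fun A => Finset.univ \ A) (fun B => Finset.univ \ B) ?_ ?_ ?_ ?_ ?_
  · intro A hA
    rw [Finset.mem_powersetCard] at hA ⊢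
    refine ⟨Finset.subset_univ _, ?_⟩
    rw [Finset.card_sdiff_of_subset (Finset.subset_univ _), Finset.card_univ, Fintype.card_fin, hA.2]
  · intro B hB
    rw [Finset.mem_powersetCard] at hB ⊢
    refine ⟨Finset.subset_univ _, ?_⟩
    rw [Finset.card_sdiff_of_subset (Finset.subset_univ _), Finset.card_univ, Fintype.card_fin, hB.2]
    omega
  · intro A hA
    exact Finset.sdiff_sdiff_eq_self (Finset.subset_univ _)
  · intro B hB
    exact Finset.sdiff_sdiff_eq_self (Finset.subset_univ _)
  · intro A hA
    rw [Finset.sdiff_sdiff_eq_self (Finset.subset_univ _)]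

lemma sum_offDiag_pair {n : ℕ} (g : Finset (Fin n) → ℝ) :
    ∑ p ∈ Finset.univ.offDiag, g {p.1, p.2}
      = 2 * ∑ B ∈ Finset.powersetCard 2 (Finset.univ : Finset (Fin n)), g B := by
  classical
  have hmap : ∀ p ∈ (Finset.univ : Finset (Fin n)).offDiag,
      ({p.1, p.2} : Finset (Fin n)) ∈ Finset.powersetCard 2 (Finset.univ : Finset (Fin n)) := by
    intro p hp
    rw [Finset.mem_powersetCard]
    rw [Finset.mem_offDiag] at hp
    refine ⟨Finset.subset_univ _, ?_⟩
    rw [Finset.card_insert_of_notMem (by simp [hp.2.2]), Finset.card_singleton]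
  rw [← Finset.sum_fiberwise_of_maps_to hmap (fun p : Fin n × Fin n => g {p.1, p.2})]
  rw [Finset.mul_sum]
  apply Finset.sum_congr rfl
  intro B hB
  rw [Finset.mem_powersetCard] at hB
  obtain ⟨a, b, hab, rfl⟩ := Finset.card_eq_two.mp hB.2
  have hfib : (Finset.univ.offDiag.filter
      (fun p : Fin n × Fin n => ({p.1, p.2} : Finset (Fin n)) = {a, b}))
      = {(a, b), (b, a)} := by
    ext p
    simp only [Finset.mem_filter, Finset.mem_offDiag, Finset.mem_univ, true_and,
      Finset.mem_insert, Finset.mem_singleton]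
    constructor
    · rintro ⟨hne, hpair⟩
      have h1 : p.1 ∈ ({a, b} : Finset (Fin n)) := by
        rw [← hpair]; simp
      have h2 : p.2 ∈ ({a, b} : Finset (Fin n)) := by
        rw [← hpair]; simp
      simp only [Finset.mem_insert, Finset.mem_singleton] at h1 h2
      rcases h1 with h1 | h1 <;> rcases h2 with h2 | h2
      · exact absurd (h1.trans h2.symm) hne
      · left; rw [Prod.ext_iff]; exact ⟨h1, h2⟩
      · right; rw [Prod.ext_iff]; exact ⟨h1, h2⟩
      · exact absurd (h1.trans h2.symm) hne
    · rintro (rfl | rfl)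
      · exact ⟨hab, rfl⟩
      · exact ⟨hab.symm, by rw [Finset.pair_comm]⟩
  rw [hfib]
  have hne : ((a, b) : Fin n × Fin n) ≠ (b, a) := by
    simp [Prod.ext_iff]; intro h; exact absurd h hab
  rw [Finset.sum_insert (by simp [hne]), Finset.sum_singleton]
  have : ({b, a} : Finset (Fin n)) = {a, b} := Finset.pair_comm b a
  rw [this]
  ring

lemma newton_base (m : ℕ) (x : Fin (m+2) → ℝ) :
    Esymm (m+2) x (m : ℕ) * Esymm (m+2) x ((m+2 : ℕ)) ≤ Esymm (m+2) x ((m+1 : ℕ)) ^ 2 := by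
  classical
  set P : Fin (m+2) → ℝ := fun i => ∏ l ∈ Finset.univ.erase i, x l with hPdef
  set S : ℝ := ∑ i, P i with hSdef
  set Q2 : ℝ := ∑ i, P i ^ 2 with hQ2def
  set T : ℝ := ∏ l, x l with hTdef
  have h1 : esymm (m+2) x ((m+1 : ℕ)) = S := by
    rw [esymm_natCast, sum_powersetCard_compl _ (by omega : m + 1 ≤ m + 2)]
    have e : m + 2 - (m + 1) = 1 := by omega
    rw [e, Finset.powersetCard_one, Finset.sum_map]
    apply Finset.sum_congr rfl
    intro i _
    simp only [Function.Embedding.coeFn_mk]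
    rw [Finset.sdiff_singleton_eq_erase]
  have h2 : esymm (m+2) x ((m+2 : ℕ)) = T := by
    rw [esymm_natCast]
    have hpc : Finset.powersetCard (m+2) (Finset.univ : Finset (Fin (m+2))) = {Finset.univ} := by
      simpa using Finset.powersetCard_self (Finset.univ : Finset (Fin (m+2)))
    rw [hpc, Finset.sum_singleton]
  have hpair : ∀ i j : Fin (m+2), i ≠ j → P i * P j = (∏ l ∈ Finset.univ \ {i, j}, x l) * T := by
    intro i j hij
    have hjmem : j ∈ Finset.univ.erase i := Finset.mem_erase.mpr ⟨hij.symm, Finset.mem_univ j⟩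
    have e1 : x j * ∏ l ∈ (Finset.univ.erase i).erase j, x l = ∏ l ∈ Finset.univ.erase i, x l :=
      Finset.mul_prod_erase _ _ hjmem
    have e2 : x j * ∏ l ∈ Finset.univ.erase j, x l = ∏ l, x l :=
      Finset.mul_prod_erase _ _ (Finset.mem_univ j)
    have e3 : Finset.univ \ ({i, j} : Finset (Fin (m+2))) = (Finset.univ.erase i).erase j := by
      rw [show ({i, j} : Finset (Fin (m+2))) = insert i {j} from rfl, Finset.sdiff_insert,
        Finset.sdiff_singleton_eq_erase, Finset.erase_right_comm]
    show (∏ l ∈ Finset.univ.erase i, x l) * (∏ l ∈ Finset.univ.erase j, x l)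
      = (∏ l ∈ Finset.univ \ {i, j}, x l) * ∏ l, x l
    rw [e3, ← e1, ← e2]
    ring
  have h3 : 2 * (esymm (m+2) x (m : ℕ) * T) = S ^ 2 - Q2 := by
    have e : m + 2 - m = 2 := by omega
    rw [esymm_natCast, sum_powersetCard_compl _ (by omega : m ≤ m + 2), e, Finset.sum_mul,
      ← sum_offDiag_pair (fun B => (∏ l ∈ Finset.univ \ B, x l) * T)]
    have e4 : ∑ p ∈ Finset.univ.offDiag,
        (∏ l ∈ Finset.univ \ ({p.1, p.2} : Finset (Fin (m+2))), x l) * T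
        = ∑ p ∈ Finset.univ.offDiag, P p.1 * P p.2 := by
      apply Finset.sum_congr rfl
      intro p hp
      rw [Finset.mem_offDiag] at hp
      rw [hpair p.1 p.2 hp.2.2]
    rw [e4]
    have e5 : S ^ 2 = ∑ p ∈ (Finset.univ : Finset (Fin (m+2))) ×ˢ Finset.univ, P p.1 * P p.2 := by
      rw [hSdef, sq, Finset.sum_mul_sum, ← Finset.sum_product']
    have e6 : ((Finset.univ : Finset (Fin (m+2))) ×ˢ Finset.univ) =
        Finset.univ.diag ∪ Finset.univ.offDiag := (Finset.diag_union_offDiag _).symm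
    rw [e5, e6, Finset.sum_union (Finset.disjoint_diag_offDiag _), Finset.sum_diag]
    have e7 : ∑ i, P i * P i = Q2 := by
      rw [hQ2def]; apply Finset.sum_congr rfl; intro i _; ring
    rw [e7]
    ring
  have hCS : S ^ 2 ≤ ((m:ℝ) + 2) * Q2 := by
    have := sq_sum_le_card_mul_sum_sq (s := (Finset.univ : Finset (Fin (m+2)))) (f := P)
    rw [Finset.card_univ, Fintype.card_fin] at this
    rw [hSdef, hQ2def]
    push_cast at this ⊢
    convert this using 2 <;> push_cast <;> ring
  have hB : 2 * ((m+2).choose m) = (m+2) * (m+1) := by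
    have hsym : (m+2).choose m = (m+2).choose 2 := by
      have := Nat.choose_symm (by omega : 2 ≤ m + 2)
      simpa using this
    have hr := Nat.choose_succ_right_eq (m+2) 1
    rw [Nat.choose_one_right] at hr
    calc 2 * ((m+2).choose m) = (m+2).choose (1+1) * (1+1) := by rw [hsym]; ring
      _ = (m+2) * (m+2-1) := hr
      _ = (m+2) * (m+1) := by norm_num
  -- now assemble
  rw [Esymm_eq, Esymm_eq, Esymm_eq, h1, h2, Nat.choose_self, Nat.choose_succ_self_right]
  have hBpos : (0:ℝ) < ((m+2).choose m : ℝ) := by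
    exact_mod_cast Nat.choose_pos (by omega : m ≤ m + 2)
  have hdpos : (0:ℝ) < ((m+2 : ℕ) : ℝ) := by positivity
  rw [Nat.cast_one, div_one, div_mul_eq_mul_div, div_pow,
    div_le_div_iff₀ hBpos (by positivity)]
  have e5 : esymm (m+2) x (m : ℕ) * T = (S^2 - Q2)/2 := by linarith [h3]
  have e6 : ((m+2).choose m : ℝ) = (((m:ℝ)+2) * ((m:ℝ)+1))/2 := by
    have := congrArg (fun t : ℕ => (t:ℝ)) hB
    push_cast at this
    linarith [this]
  rw [e5, e6]
  have key : ((m:ℝ)+2) * S^2 ≤ ((m:ℝ)+2)*(((m:ℝ)+2) * Q2) :=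
    mul_le_mul_of_nonneg_left hCS (by positivity)
  push_cast
  nlinarith [key]


theorem newton_nat : ∀ (n : ℕ) (x : Fin n → ℝ) (j : ℕ), 1 ≤ j →
    Esymm n x ((j-1 : ℕ)) * Esymm n x ((j+1 : ℕ)) ≤ Esymm n x (j : ℕ) ^ 2 := by
  intro n
  induction n with
  | zero =>
      intro x j hj
      rw [Esymm_gt 0 x (j+1) (by omega)]
      simpa using sq_nonneg (Esymm 0 x (j : ℕ))
  | succ n ih =>
      intro x j hj
      rcases lt_trichotomy (n + 1) (j + 1) with h | h | h
      · rw [Esymm_gt (n+1) x (j+1) (by omega)]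
        simpa using sq_nonneg (Esymm (n+1) x (j : ℕ))
      · have hn : j = n := by omega
        subst hn
        obtain ⟨m, rfl⟩ : ∃ m, j = m + 1 := ⟨j - 1, by omega⟩
        simp only [Nat.add_sub_cancel]
        have := newton_base m x
        convert this using 4 <;> omega
      · obtain ⟨y, hy⟩ := exists_derived n x
        rw [← hy (j-1) (by omega), ← hy (j+1) (by omega), ← hy j (by omega)]
        exact ih y j hj

theorem newtonZ (n : ℕ) (x : Fin n → ℝ) (m : ℤ) :
    Esymm n x (m - 1) * Esymm n x (m + 1) ≤ Esymm n x m ^ 2 := by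
  rcases le_or_gt m 0 with h | h
  · rw [Esymm_neg n x (m-1) (by omega)]
    simpa using sq_nonneg (Esymm n x m)
  · obtain ⟨j, rfl⟩ : ∃ j : ℕ, m = (j : ℤ) := ⟨m.toNat, by omega⟩
    have hj : 1 ≤ j := by exact_mod_cast h
    have := newton_nat n x j hj
    have e1 : ((j : ℤ) - 1) = ((j - 1 : ℕ) : ℤ) := by omega
    have e2 : ((j : ℤ) + 1) = ((j + 1 : ℕ) : ℤ) := by omega
    rw [e1, e2]
    exact this


lemma esymm_shift (n : ℕ) (x : Fin n → ℝ) (ε : ℝ) (m : ℕ) (hm : m ≤ n) :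
    esymm n (fun i => x i + ε) m
      = ∑ d ∈ Finset.range (m+1),
          ((d + (n-m)).choose (n-m) : ℝ) * esymm n x ((m-d : ℕ)) * ε^d := by
  classical
  set P : ℝ[X] := (((Finset.univ.val.map x) : Multiset ℝ).map (fun r => X + C r)).prod with hP
  have hcardM : Multiset.card (Finset.univ.val.map x) = n := by simp
  have hPcoeff : ∀ c : ℕ, c ≤ n → P.coeff c = esymm n x ((n - c : ℕ) : ℤ) := by
    intro c hc
    rw [hP, Multiset.prod_X_add_C_coeff _ (by rw [hcardM]; exact hc), hcardM,
      esymm_eq_multiset_esymm]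
  have hPeq : P = (((Finset.univ.val.map x).map (fun a => -a)).map (fun a => X - C a)).prod := by
    rw [hP]
    simp only [Multiset.map_map]
    congr 1
    apply Multiset.map_congr rfl
    intro a _
    simp [Function.comp, sub_neg_eq_add]
  have hPdeg : P.natDegree = n := by
    rw [hPeq, natDegree_multiset_prod_X_sub_C_eq_card]
    simp
  have hcomp : ∀ M : Multiset ℝ[X], (M.prod).comp (X + C ε) = (M.map (fun q => q.comp (X + C ε))).prod := by
    intro M
    induction M using Multiset.induction with
    | empty => simp
    | cons a t iht => simp [Multiset.prod_cons, mul_comp, iht]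
  have hPε : (((Finset.univ.val.map (fun i => x i + ε)) : Multiset ℝ).map
      (fun r => X + C r)).prod = taylor ε P := by
    rw [hP, taylor_apply, hcomp]
    simp only [Multiset.map_map]
    congr 1
    apply Multiset.map_congr rfl
    intro i _
    simp only [Function.comp, add_comp, X_comp, C_comp]
    rw [C_add]
    ring
  have hc2 : Multiset.card (Finset.univ.val.map (fun i => x i + ε)) = n := by simp
  have hεcoeff : esymm n (fun i => x i + ε) m = (taylor ε P).coeff (n - m) := by
    rw [← hPε, Multiset.prod_X_add_C_coeff _ (by rw [hc2]; omega), hc2,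
      (by omega : n - (n - m) = m), esymm_eq_multiset_esymm]
  rw [hεcoeff, taylor_coeff]
  have hdeg2 : (hasseDeriv (n - m) P).natDegree < m + 1 := by
    have := natDegree_hasseDeriv_le P (n - m)
    rw [hPdeg] at this
    omega
  rw [eval_eq_sum_range' hdeg2]
  apply Finset.sum_congr rfl
  intro d hd
  rw [Finset.mem_range] at hd
  rw [hasseDeriv_coeff, hPcoeff (d + (n - m)) (by omega)]
  have e1 : n - (d + (n - m)) = m - d := by omega
  rw [e1]

lemma Esymm_shift_pos (n : ℕ) (x : Fin n → ℝ) (ε : ℝ) (hε : 0 < ε) (m : ℕ) (hm : m ≤ n)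
    (hσ : ∀ j : ℕ, 1 ≤ j → j ≤ m → 0 ≤ Esymm n x j) :
    0 < Esymm n (fun i => x i + ε) m := by
  have hσ' : ∀ j : ℕ, j ≤ m → 0 ≤ esymm n x j := by
    intro j hj
    rcases Nat.eq_zero_or_pos j with rfl | hj1
    · rw [Nat.cast_zero, esymm_zero]; norm_num
    · have h1 := hσ j hj1 hj
      rw [Esymm_eq] at h1
      have h2 : (0:ℝ) < (n.choose j : ℝ) := by
        exact_mod_cast Nat.choose_pos (le_trans hj hm)
      have := mul_le_mul_of_nonneg_right h1 h2.le
      simpa [div_mul_cancel₀, h2.ne'] using this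
  have hpos : 0 < esymm n (fun i => x i + ε) m := by
    rw [esymm_shift n x ε m hm]
    apply Finset.sum_pos'
    · intro d hd
      rw [Finset.mem_range] at hd
      have := hσ' (m - d) (by omega)
      positivity
    · refine ⟨m, by simp, ?_⟩
      rw [Nat.sub_self, Nat.cast_zero, esymm_zero]
      have hc : 0 < ((m + (n-m)).choose (n-m) : ℝ) := by
        exact_mod_cast Nat.choose_pos (by omega)
      positivity
  rw [Esymm_eq]
  have h2 : (0:ℝ) < (n.choose m : ℝ) := by exact_mod_cast Nat.choose_pos hm
  positivity


lemma ratio_lemma (f : ℤ → ℝ) (K N : ℤ)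
    (h0 : ∀ m : ℤ, m < 0 → f m = 0)
    (hz : ∀ m : ℤ, N < m → f m = 0)
    (hp : ∀ m : ℤ, 0 ≤ m → m ≤ K → m ≤ N → 0 < f m)
    (hnewt : ∀ m : ℤ, f (m-1) * f (m+1) ≤ f m ^ 2) :
    ∀ p q : ℤ, p ≤ q → q ≤ K → f p * f (q+1) ≤ f (p+1) * f q := by
  have hnn : ∀ m : ℤ, m ≤ K → 0 ≤ f m := by
    intro m hm
    rcases lt_or_ge m 0 with h | h
    · rw [h0 m h]
    · rcases le_or_gt m N with h2 | h2
      · exact (hp m h hm h2).le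
      · rw [hz m h2]
  intro p q hpq hqK
  rcases le_or_gt q N with hqN | hqN
  swap
  · rw [hz q hqN, hz (q+1) (by omega)]
    simp
  rcases lt_or_ge p 0 with hp0 | hp0
  · rcases lt_or_ge q 0 with hq0 | hq0
    · rw [h0 p hp0, h0 q hq0]
      simp
    · rw [h0 p hp0]
      have h1 := hnn (p+1) (by omega)
      have h2 := hnn q hqK
      nlinarith
  have main : ∀ r : ℤ, p ≤ r → (r ≤ K → r ≤ N → f p * f (r+1) ≤ f (p+1) * f r) := by
    refine fun r hr => Int.le_induction
      (motive := fun r _ => r ≤ K → r ≤ N → f p * f (r+1) ≤ f (p+1) * f r) ?_ ?_ r hr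
    · intro _ _
      exact le_of_eq (mul_comm _ _)
    · intro q hq ih hK hN
      have ihq := ih (by omega) (by omega)
      have hfq : 0 < f q := hp q (by omega) (by omega) (by omega)
      have hfq1 : 0 < f (q+1) := hp (q+1) (by omega) hK hN
      have hfp : 0 ≤ f p := hnn p (by omega)
      have hN2 := hnewt (q+1)
      rw [add_sub_cancel_right] at hN2
      rw [(by ring : q + 1 + 1 = q + 2)] at hN2 ⊢
      have key1 : f p * f (q+2) * (f q * f (q+1)) ≤ f (p+1) * f (q+1) * (f q * f (q+1)) := by
        have A : (f p * f (q+1)) * (f q * f (q+2)) ≤ (f p * f (q+1)) * f (q+1)^2 :=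
          mul_le_mul_of_nonneg_left hN2 (mul_nonneg hfp hfq1.le)
        have B : (f p * f (q+1)) * f (q+1)^2 ≤ (f (p+1) * f q) * f (q+1)^2 :=
          mul_le_mul_of_nonneg_right ihq (sq_nonneg _)
        calc f p * f (q+2) * (f q * f (q+1)) = (f p * f (q+1)) * (f q * f (q+2)) := by ring
          _ ≤ (f p * f (q+1)) * f (q+1)^2 := A
          _ ≤ (f (p+1) * f q) * f (q+1)^2 := B
          _ = f (p+1) * f (q+1) * (f q * f (q+1)) := by ring
      exact le_of_mul_le_mul_right key1 (by positivity)
  exact main q hpq hqK hqN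

lemma choose_newton (s t : ℕ) (ht : 1 ≤ t) :
    (s.choose (t-1)) * (s.choose (t+1)) ≤ (s.choose t)^2 := by
  rcases le_or_gt t s with hts | hts
  swap
  · rw [Nat.choose_eq_zero_of_lt (show s < t + 1 by omega)]
    simp
  have h1 := Nat.choose_succ_right_eq s t
  have h2 := Nat.choose_succ_right_eq s (t-1)
  rw [(by omega : t - 1 + 1 = t), (by omega : s - (t-1) = s - t + 1)] at h2
  have key : ((t+1)*(s-t+1)) * (s.choose (t-1) * s.choose (t+1))
      ≤ ((t+1)*(s-t+1)) * (s.choose t ^ 2) := by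
    calc ((t+1)*(s-t+1)) * (s.choose (t-1) * s.choose (t+1))
        = (s.choose (t-1)*(s-t+1)) * (s.choose (t+1)*(t+1)) := by ring
      _ = (s.choose t * t) * (s.choose t * (s-t)) := by rw [← h2, ← h1]
      _ = (t*(s-t)) * (s.choose t^2) := by ring
      _ ≤ ((t+1)*(s-t+1)) * (s.choose t^2) := by
          apply Nat.mul_le_mul_right
          exact Nat.mul_le_mul (by omega) (by omega)
  exact Nat.le_of_mul_le_mul_left key (by positivity)

lemma key_ineq (e c : ℤ → ℝ) (s k : ℕ)
    (hcneg : c (-1) = 0) (hctop : c ((s:ℤ)+1) = 0)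
    (hcratio : ∀ i j : ℤ, i ≤ j → j ≤ (s:ℤ) + 1 → c (i-1) * c j ≤ c i * c (j-1))
    (heratio : ∀ p q : ℤ, p ≤ q → q ≤ (k:ℤ) → e p * e (q+1) ≤ e (p+1) * e q) :
    0 ≤ (∑ i ∈ Finset.range (s+2), c i * e (k - i))^2
        - (∑ i ∈ Finset.range (s+2), c i * e ((k:ℤ) - 1 - i))
          * (∑ i ∈ Finset.range (s+2), c i * e ((k:ℤ) + 1 - i)) := by
  classical
  set R := Finset.range (s+2) with hR
  have shift : ∀ m : ℤ, ∑ i ∈ R, c i * e (m - i) = ∑ j ∈ R, c ((j:ℤ)-1) * e (m + 1 - j) := by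
    intro m
    have hL : ∑ i ∈ R, c i * e (m - i) = ∑ i ∈ Finset.range (s+1), c i * e (m - i) := by
      rw [hR, Finset.sum_range_succ]
      have h4 : ((s+1 : ℕ) : ℤ) = (s:ℤ)+1 := by push_cast; ring
      rw [h4, hctop]
      simp
    have hRr : ∑ j ∈ R, c ((j:ℤ)-1) * e (m + 1 - j)
        = ∑ j ∈ Finset.range (s+1), c j * e (m - j) := by
      rw [hR, Finset.sum_range_succ' (fun j => c ((j:ℤ)-1) * e (m + 1 - (j:ℤ))) (s+1)]
      simp only [Nat.cast_zero, zero_sub, hcneg, zero_mul, add_zero]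
      apply Finset.sum_congr rfl
      intro i _
      have e1 : ((i+1 : ℕ) : ℤ) - 1 = (i:ℤ) := by push_cast; ring
      have e2 : m + 1 - ((i+1 : ℕ) : ℤ) = m - i := by push_cast; ring
      rw [e1, e2]
    rw [hL, hRr]
  have expand : (∑ i ∈ R, c i * e (k - i))^2
      - (∑ i ∈ R, c i * e ((k:ℤ) - 1 - i)) * (∑ i ∈ R, c i * e ((k:ℤ) + 1 - i))
      = ∑ i ∈ R, ∑ j ∈ R,
          (c i * c ((j:ℤ)-1) - c ((i:ℤ)-1) * c j) * (e ((k:ℤ) - i) * e ((k:ℤ) + 1 - j)) := by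
    have h1 : (∑ i ∈ R, c i * e (k - i))^2
        = (∑ i ∈ R, c i * e ((k:ℤ) - i)) * (∑ j ∈ R, c ((j:ℤ)-1) * e ((k:ℤ) + 1 - j)) := by
      rw [sq, ← shift (k:ℤ)]
    have h2 : (∑ i ∈ R, c i * e ((k:ℤ) - 1 - i))
        = ∑ j ∈ R, c ((j:ℤ)-1) * e ((k:ℤ) - j) := by
      rw [shift ((k:ℤ) - 1)]
      apply Finset.sum_congr rfl
      intro j _
      rw [(by ring : (k:ℤ) - 1 + 1 - (j:ℤ) = (k:ℤ) - j)]
    rw [h1, h2, Finset.sum_mul_sum, Finset.sum_mul_sum, ← Finset.sum_sub_distrib]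
    apply Finset.sum_congr rfl
    intro i _
    rw [← Finset.sum_sub_distrib]
    apply Finset.sum_congr rfl
    intro j _
    ring
  have transpose : ∑ i ∈ R, ∑ j ∈ R,
        (c i * c ((j:ℤ)-1) - c ((i:ℤ)-1) * c j) * (e ((k:ℤ) - j) * e ((k:ℤ) + 1 - i))
      = - ∑ i ∈ R, ∑ j ∈ R,
          (c i * c ((j:ℤ)-1) - c ((i:ℤ)-1) * c j) * (e ((k:ℤ) - i) * e ((k:ℤ) + 1 - j)) := by
    have h3 : ∑ i ∈ R, ∑ j ∈ R,
          (c i * c ((j:ℤ)-1) - c ((i:ℤ)-1) * c j) * (e ((k:ℤ) - j) * e ((k:ℤ) + 1 - i))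
        = ∑ j ∈ R, ∑ i ∈ R,
          (c i * c ((j:ℤ)-1) - c ((i:ℤ)-1) * c j) * (e ((k:ℤ) - j) * e ((k:ℤ) + 1 - i)) :=
      Finset.sum_comm
    rw [h3, ← Finset.sum_neg_distrib]
    apply Finset.sum_congr rfl
    intro i _
    rw [← Finset.sum_neg_distrib]
    apply Finset.sum_congr rfl
    intro j _
    ring
  have hGpos : ∀ i ∈ R, ∀ j ∈ R,
      0 ≤ (c i * c ((j:ℤ)-1) - c ((i:ℤ)-1) * c j)
          * (e ((k:ℤ) - i) * e ((k:ℤ) + 1 - j) - e ((k:ℤ) - j) * e ((k:ℤ) + 1 - i)) := by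
    intro i hi j hj
    rw [hR, Finset.mem_range] at hi hj
    rcases le_or_gt i j with hij | hij
    · have hc1 := hcratio i j (by exact_mod_cast hij) (by omega)
      have he1 := heratio ((k:ℤ) - j) ((k:ℤ) - i) (by omega) (by omega)
      rw [(by ring : (k:ℤ) - i + 1 = (k:ℤ) + 1 - i),
        (by ring : (k:ℤ) - j + 1 = (k:ℤ) + 1 - j)] at he1
      apply mul_nonneg <;> linarith
    · have hc1 := hcratio j i (by omega) (by omega)
      have he1 := heratio ((k:ℤ) - i) ((k:ℤ) - j) (by omega) (by omega)
      rw [(by ring : (k:ℤ) - i + 1 = (k:ℤ) + 1 - i),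
        (by ring : (k:ℤ) - j + 1 = (k:ℤ) + 1 - j)] at he1
      nlinarith
  have hsumG : 0 ≤ ∑ i ∈ R, ∑ j ∈ R,
      (c i * c ((j:ℤ)-1) - c ((i:ℤ)-1) * c j)
        * (e ((k:ℤ) - i) * e ((k:ℤ) + 1 - j) - e ((k:ℤ) - j) * e ((k:ℤ) + 1 - i)) :=
    Finset.sum_nonneg (fun i hi => Finset.sum_nonneg (fun j hj => hGpos i hi j hj))
  have hsplit : ∑ i ∈ R, ∑ j ∈ R,
      (c i * c ((j:ℤ)-1) - c ((i:ℤ)-1) * c j)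
        * (e ((k:ℤ) - i) * e ((k:ℤ) + 1 - j) - e ((k:ℤ) - j) * e ((k:ℤ) + 1 - i))
      = (∑ i ∈ R, ∑ j ∈ R,
          (c i * c ((j:ℤ)-1) - c ((i:ℤ)-1) * c j) * (e ((k:ℤ) - i) * e ((k:ℤ) + 1 - j)))
        - ∑ i ∈ R, ∑ j ∈ R,
          (c i * c ((j:ℤ)-1) - c ((i:ℤ)-1) * c j) * (e ((k:ℤ) - j) * e ((k:ℤ) + 1 - i)) := by
    rw [← Finset.sum_sub_distrib]
    apply Finset.sum_congr rfl
    intro i _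
    rw [← Finset.sum_sub_distrib]
    apply Finset.sum_congr rfl
    intro j _
    ring
  rw [expand]
  rw [hsplit, transpose] at hsumG
  linarith


noncomputable def cseq (s : ℕ) (α : ℝ) : ℤ → ℝ :=
  fun i => if 0 ≤ i then (s.choose i.toNat : ℝ) * α ^ i.toNat else 0

lemma Ss_eq (n : ℕ) (α : ℝ) (x : Fin n → ℝ) (s : ℕ) (m : ℤ) :
    Ss n α x s m = ∑ i ∈ Finset.range (s+2), cseq s α i * Esymm n x (m - i) := by
  rw [Ss]
  conv_rhs => rw [Finset.sum_range_succ]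
  have h1 : cseq s α ((s+1 : ℕ) : ℤ) = 0 := by
    have ht : (((s+1 : ℕ) : ℤ)).toNat = s + 1 := by omega
    simp [cseq, ht, Nat.choose_eq_zero_of_lt (show s < s + 1 by omega)]
  rw [h1, zero_mul, add_zero]
  apply Finset.sum_congr rfl
  intro i _
  simp [cseq, mul_assoc]

lemma cseq_ratio (s : ℕ) (α : ℝ) (hα : 0 < α) :
    ∀ i j : ℤ, i ≤ j → j ≤ (s:ℤ) + 1 → cseq s α (i-1) * cseq s α j ≤ cseq s α i * cseq s α (j-1) := by
  have h0 : ∀ m : ℤ, m < 0 → cseq s α m = 0 := by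
    intro m hm; simp [cseq, not_le.mpr hm]
  have hz : ∀ m : ℤ, (s:ℤ) < m → cseq s α m = 0 := by
    intro m hm
    have : s < m.toNat := by omega
    simp [cseq, Nat.choose_eq_zero_of_lt this]
  have hp : ∀ m : ℤ, 0 ≤ m → m ≤ (s:ℤ) → m ≤ (s:ℤ) → 0 < cseq s α m := by
    intro m h1 h2 _
    have hc : 0 < (s.choose m.toNat : ℝ) := by
      exact_mod_cast Nat.choose_pos (by omega : m.toNat ≤ s)
    simp only [cseq, if_pos h1]
    positivity
  have hnewt : ∀ m : ℤ, cseq s α (m-1) * cseq s α (m+1) ≤ cseq s α m ^ 2 := by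
    intro m
    rcases lt_or_ge m 1 with hm | hm
    · rw [h0 (m-1) (by omega), zero_mul]
      exact sq_nonneg _
    · have ht : 1 ≤ m.toNat := by omega
      have e1 : (m-1).toNat = m.toNat - 1 := by omega
      have e2 : (m+1).toNat = m.toNat + 1 := by omega
      simp only [cseq, if_pos (by omega : (0:ℤ) ≤ m - 1), if_pos (by omega : (0:ℤ) ≤ m + 1),
        if_pos (by omega : (0:ℤ) ≤ m), e1, e2]
      have hcn := choose_newton s m.toNat ht
      have hcnR : ((s.choose (m.toNat-1) * s.choose (m.toNat+1) : ℕ) : ℝ)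
          ≤ ((s.choose m.toNat ^ 2 : ℕ) : ℝ) := by exact_mod_cast hcn
      push_cast at hcnR
      have hpow : α ^ (m.toNat - 1) * α ^ (m.toNat + 1) = α ^ m.toNat * α ^ m.toNat := by
        rw [← pow_add, ← pow_add]
        congr 1
        omega
      calc (s.choose (m.toNat-1) : ℝ) * α ^ (m.toNat-1) * ((s.choose (m.toNat+1) : ℝ) * α ^ (m.toNat+1))
          = (s.choose (m.toNat-1) : ℝ) * (s.choose (m.toNat+1) : ℝ) * (α ^ (m.toNat-1) * α ^ (m.toNat+1)) := by ring
        _ = (s.choose (m.toNat-1) : ℝ) * (s.choose (m.toNat+1) : ℝ) * (α ^ m.toNat * α ^ m.toNat) := by rw [hpow]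
        _ ≤ (s.choose m.toNat : ℝ) ^ 2 * (α ^ m.toNat * α ^ m.toNat) := by
            apply mul_le_mul_of_nonneg_right _ (by positivity)
            nlinarith [hcnR]
        _ = ((s.choose m.toNat : ℝ) * α ^ m.toNat) ^ 2 := by ring
  intro i j hij hjs
  have := ratio_lemma (cseq s α) (s:ℤ) (s:ℤ) h0 hz hp hnewt (i-1) (j-1) (by omega) (by omega)
  simpa [sub_add_cancel] using this

theorem Ss_newton_low (n s k : ℕ) (α : ℝ) (x : Fin n → ℝ)
    (hα : 0 ≤ α) (hE : ∀ i : ℕ, 1 ≤ i → i ≤ s → 0 ≤ Esymm n x i)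
    (hk1 : 1 ≤ k) (hk2 : k ≤ s) :
    0 ≤ Ss n α x s k ^ 2 - Ss n α x s ((k : ℤ) - 1) * Ss n α x s ((k : ℤ) + 1) := by
  rcases hα.eq_or_lt with heq | hα0
  · -- α = 0
    have hSs : ∀ m : ℤ, Ss n α x s m = Esymm n x m := by
      intro m
      rw [Ss]
      rw [Finset.sum_eq_single_of_mem 0 (by simp)]
      · simp [← heq]
      · intro i _ hi
        rw [← heq]
        simp [zero_pow hi]
    rw [hSs, hSs, hSs]
    have := newtonZ n x k
    linarith
  · -- α > 0
    have hstep : ∀ ε : ℝ, 0 < ε →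
        0 ≤ Ss n α (fun i => x i + ε) s k ^ 2
          - Ss n α (fun i => x i + ε) s ((k:ℤ) - 1) * Ss n α (fun i => x i + ε) s ((k:ℤ) + 1) := by
      intro ε hε
      rw [Ss_eq, Ss_eq, Ss_eq]
      apply key_ineq (Esymm n (fun i => x i + ε)) (cseq s α) s k
      · simp [cseq]
      · have ht : (((s:ℤ)+1)).toNat = s + 1 := by omega
        simp [cseq, ht, Nat.choose_eq_zero_of_lt (show s < s + 1 by omega)]
      · exact cseq_ratio s α hα0
      · apply ratio_lemma (Esymm n (fun i => x i + ε)) (k:ℤ) (n:ℤ)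
        · intro m hm; exact Esymm_neg n _ m hm
        · intro m hm
          obtain ⟨j, rfl⟩ : ∃ j : ℕ, m = (j : ℤ) := ⟨m.toNat, by omega⟩
          exact Esymm_gt n _ j (by exact_mod_cast hm)
        · intro m h0m hmk hmn
          obtain ⟨j, rfl⟩ : ∃ j : ℕ, m = (j : ℤ) := ⟨m.toNat, by omega⟩
          rcases Nat.eq_zero_or_pos j with rfl | hj1
          · rw [Nat.cast_zero, Esymm_zero]; norm_num
          · exact Esymm_shift_pos n x ε hε j (by exact_mod_cast hmn)
              (fun j' h1 h2 => hE j' h1 (by have : (j:ℤ) ≤ k := hmk; omega))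
        · exact newtonZ n _
    -- limit ε → 0⁺
    have hx0 : (fun i => x i + (0:ℝ)) = x := by funext i; ring
    have hce : ∀ m : ℤ, Continuous (fun ε : ℝ => Esymm n (fun i => x i + ε) m) := by
      intro m
      apply Continuous.div_const
      rcases lt_or_ge m 0 with hm | hm
      · simp only [esymm_neg n _ m hm]
        -- careful: esymm_neg applies pointwise in ε
        exact continuous_const
      · obtain ⟨j, rfl⟩ : ∃ j : ℕ, m = (j : ℤ) := ⟨m.toNat, by omega⟩
        simp only [esymm_natCast]
        apply continuous_finset_sum
        intro A _
        apply continuous_finset_prod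
        intro i _
        exact continuous_const.add continuous_id
    have hcS : ∀ m : ℤ, Continuous (fun ε : ℝ => Ss n α (fun i => x i + ε) s m) := by
      intro m
      simp only [Ss]
      apply continuous_finset_sum
      intro i _
      exact continuous_const.mul (hce (m - i))
    have hcont : Continuous (fun ε : ℝ => Ss n α (fun i => x i + ε) s k ^ 2
        - Ss n α (fun i => x i + ε) s ((k:ℤ) - 1) * Ss n α (fun i => x i + ε) s ((k:ℤ) + 1)) := by
      exact ((hcS k).pow 2).sub ((hcS ((k:ℤ)-1)).mul (hcS ((k:ℤ)+1)))
    have htend : Filter.Tendsto (fun ε : ℝ => Ss n α (fun i => x i + ε) s k ^ 2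
        - Ss n α (fun i => x i + ε) s ((k:ℤ) - 1) * Ss n α (fun i => x i + ε) s ((k:ℤ) + 1))
        (nhdsWithin 0 (Set.Ioi (0:ℝ))) (nhds (Ss n α (fun i => x i + (0:ℝ)) s k ^ 2
        - Ss n α (fun i => x i + (0:ℝ)) s ((k:ℤ) - 1) * Ss n α (fun i => x i + (0:ℝ)) s ((k:ℤ) + 1))) :=
      (hcont.tendsto 0).mono_left nhdsWithin_le_nhds
    have hev : ∀ᶠ ε in nhdsWithin 0 (Set.Ioi (0:ℝ)),
        0 ≤ Ss n α (fun i => x i + ε) s k ^ 2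
          - Ss n α (fun i => x i + ε) s ((k:ℤ) - 1) * Ss n α (fun i => x i + ε) s ((k:ℤ) + 1) :=
      eventually_mem_nhdsWithin.mono (fun ε hε => hstep ε hε)
    have := ge_of_tendsto htend hev
    rw [hx0] at this
    exact this

end Aux
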